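/- Let N ≥ 1 be an integer, q ∈ [0,1], and set μ = N·q. Let f : ℕ → ℝ satisfy 0 ≤ f(n) ≤ 1 for all n, and define F_f(N) = Σ_{n=0}^{N} C(N,n) q^n (1-q)^{N-n} f(n). For any δ ∈ (0,1), define g_f(N,δ) = min{ f(n) : ⌊(1-δ)μ⌋ ≤ n ≤ ⌈(1+δ)μ⌉ } and h_f(N,δ) = max{ f(n) : ⌊(1-δ)μ⌋ ≤ n ≤ ⌈(1+δ)μ⌉ }. Then g_f(N,δ)·(1 - 2e^{-μδ²/3}) ≤ F_f(N) ≤ h_f(N,δ) + 2e^{-μδ²/3}. -/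

import Mathlib

open Finset Real

lemma log_lower (y : ℝ) (h0 : 0 ≤ y) (h1 : y ≤ 1) : y * Real.log 2 ≤ Real.log (1 + y) := by
  have hc := strictConcaveOn_log_Ioi.concaveOn
  have h := hc.2 (Set.mem_Ioi.2 one_pos) (Set.mem_Ioi.2 two_pos)
    (show (0:ℝ) ≤ 1 - y by linarith) h0 (by ring)
  simp only [smul_eq_mul, Real.log_one, mul_zero, zero_add] at h
  calc y * Real.log 2 ≤ Real.log ((1-y)*1 + y*2) := h
    _ = Real.log (1 + y) := by ring_nf

lemma hasDerivA (y : ℝ) (h1y : (0:ℝ) < 1 + y) :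
    HasDerivAt (fun z : ℝ => (1 + z) * Real.log (1 + z) - z - z ^ 2 / 3)
      (Real.log (1 + y) - 2 * y / 3) y := by
  have hlog : HasDerivAt (fun z : ℝ => Real.log (1 + z)) (1 / (1 + y)) y := by
    simpa using ((hasDerivAt_id y).const_add 1).log (ne_of_gt h1y)
  have hmul : HasDerivAt (fun z : ℝ => (1 + z) * Real.log (1 + z))
      (1 * Real.log (1 + y) + (1 + y) * (1 / (1 + y))) y :=
    ((hasDerivAt_id y).const_add 1).mul hlog
  have h2 := (hmul.sub (hasDerivAt_id y)).sub ((hasDerivAt_pow 2 y).div_const 3)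
  refine h2.congr_deriv ?_
  field_simp
  rw [show (2:ℕ) - 1 = 1 from rfl]
  push_cast
  ring

lemma aux_A (x : ℝ) (hx0 : 0 ≤ x) (hx1 : x ≤ 1) :
    x ^ 2 / 3 ≤ (1 + x) * Real.log (1 + x) - x := by
  set g : ℝ → ℝ := fun y => (1 + y) * Real.log (1 + y) - y - y ^ 2 / 3 with hg
  have hmono : MonotoneOn g (Set.Icc (0:ℝ) 1) := by
    apply monotoneOn_of_deriv_nonneg (convex_Icc 0 1)
    · apply ContinuousOn.sub
      apply ContinuousOn.sub
      · exact (continuousOn_const.add continuousOn_id).mul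
          ((continuousOn_const.add continuousOn_id).log
            (fun y hy => by have := hy.1; simp; positivity))
      · exact continuousOn_id
      · exact (continuousOn_pow 2).div_const 3
    · intro y hy
      rw [interior_Icc] at hy
      exact (hasDerivA y (by linarith [hy.1])).differentiableAt.differentiableWithinAt
    · intro y hy
      rw [interior_Icc] at hy
      rw [(hasDerivA y (by linarith [hy.1])).deriv]
      have := log_lower y hy.1.le hy.2.le
      have h2 : (0.6931471803:ℝ) < Real.log 2 := Real.log_two_gt_d9
      nlinarith [hy.1.le]
  have h0 : g 0 ≤ g x := hmono (by simp) (by simp [hx0, hx1]) hx0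
  simp [hg] at h0
  linarith

lemma aux_B (x : ℝ) (hx0 : 0 ≤ x) (hx1 : x < 1) :
    x ^ 2 / 2 ≤ (1 - x) * Real.log (1 - x) + x := by
  set g : ℝ → ℝ := fun y => (1 - y) * Real.log (1 - y) + y - y ^ 2 / 2 with hg
  have hd : ∀ y : ℝ, (0:ℝ) < 1 - y →
      HasDerivAt g (-Real.log (1 - y) - y) y := by
    intro y h1y
    have hlog : HasDerivAt (fun z : ℝ => Real.log (1 - z)) (-1 / (1 - y)) y := by
      simpa using ((hasDerivAt_id y).const_sub 1).log (ne_of_gt h1y)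
    have hmul : HasDerivAt (fun z : ℝ => (1 - z) * Real.log (1 - z))
        (-1 * Real.log (1 - y) + (1 - y) * (-1 / (1 - y))) y :=
      ((hasDerivAt_id y).const_sub 1).mul hlog
    have h2 := (hmul.add (hasDerivAt_id y)).sub ((hasDerivAt_pow 2 y).div_const 2)
    refine h2.congr_deriv ?_
    field_simp
    ring
  have hmono : MonotoneOn g (Set.Icc (0:ℝ) x) := by
    apply monotoneOn_of_deriv_nonneg (convex_Icc 0 x)
    · apply ContinuousOn.sub
      apply ContinuousOn.add
      · exact (continuousOn_const.sub continuousOn_id).mul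
          ((continuousOn_const.sub continuousOn_id).log
            (fun y hy => by have := hy.2; simp only [Pi.sub_apply, id]; intro h; nlinarith))
      · exact continuousOn_id
      · exact (continuousOn_pow 2).div_const 2
    · intro y hy
      rw [interior_Icc] at hy
      exact (hd y (by linarith [hy.2])).differentiableAt.differentiableWithinAt
    · intro y hy
      rw [interior_Icc] at hy
      rw [(hd y (by linarith [hy.2])).deriv]
      have hl : Real.log (1 - y) ≤ (1 - y) - 1 :=
        Real.log_le_sub_one_of_pos (by linarith [hy.2])
      linarith
  have h0 : g 0 ≤ g x := hmono (by simp [hx0]) (by simp [hx0]) hx0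
  simp [hg] at h0
  linarith

lemma mgf_sum (N : ℕ) (q r : ℝ) :
    ∑ n ∈ Finset.range (N + 1), (N.choose n : ℝ) * q ^ n * (1 - q) ^ (N - n) * r ^ n
      = (q * r + (1 - q)) ^ N := by
  rw [add_pow]
  apply Finset.sum_congr rfl
  intro n hn
  rw [mul_pow]
  ring

lemma mgf_bound (N : ℕ) (q r : ℝ) (hq0 : 0 ≤ q) (hq1 : q ≤ 1) (hr : 0 ≤ r) :
    (q * r + (1 - q)) ^ N ≤ Real.exp ((N : ℝ) * (q * (r - 1))) := by
  have h1 : q * r + (1 - q) ≤ Real.exp (q * (r - 1)) := by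
    have := Real.add_one_le_exp (q * (r - 1))
    linarith
  have h0 : 0 ≤ q * r + (1 - q) := by nlinarith
  calc (q * r + (1 - q)) ^ N ≤ (Real.exp (q * (r - 1))) ^ N := pow_le_pow_left₀ h0 h1 N
    _ = Real.exp ((N : ℝ) * (q * (r - 1))) := by rw [← Real.exp_nat_mul]

lemma tail_le (N : ℕ) (p w : ℕ → ℝ) (hp : ∀ n, 0 ≤ p n)
    (P : ℕ → Prop) [DecidablePred P] (hw0 : ∀ n, 0 ≤ w n) (hw1 : ∀ n, P n → 1 ≤ w n) :
    ∑ n ∈ (Finset.range (N + 1)).filter P, p n ≤ ∑ n ∈ Finset.range (N + 1), p n * w n := by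
  calc ∑ n ∈ (Finset.range (N + 1)).filter P, p n
      ≤ ∑ n ∈ (Finset.range (N + 1)).filter P, p n * w n := by
        apply Finset.sum_le_sum
        intro n hn
        exact le_mul_of_one_le_right (hp n) (hw1 n (Finset.mem_filter.1 hn).2)
    _ ≤ ∑ n ∈ Finset.range (N + 1), p n * w n :=
        Finset.sum_le_sum_of_subset_of_nonneg (Finset.filter_subset _ _)
          (fun n _ _ => mul_nonneg (hp n) (hw0 n))

theorem chernoff_window_bounds (N : ℕ) (hN : 1 ≤ N) (q : ℝ) (hq : q ∈ Set.Icc (0:ℝ) 1)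
    (f : ℕ → ℝ) (hf : ∀ n, f n ∈ Set.Icc (0:ℝ) 1)
    (δ : ℝ) (hδ : δ ∈ Set.Ioo (0:ℝ) 1) :
    sInf (f '' Set.Icc ⌊(1 - δ) * ((N : ℝ) * q)⌋₊ ⌈(1 + δ) * ((N : ℝ) * q)⌉₊) *
        (1 - 2 * Real.exp (-(((N : ℝ) * q) * δ ^ 2) / 3)) ≤
      ∑ n ∈ Finset.range (N + 1),
        (N.choose n : ℝ) * q ^ n * (1 - q) ^ (N - n) * f n ∧
    ∑ n ∈ Finset.range (N + 1),
        (N.choose n : ℝ) * q ^ n * (1 - q) ^ (N - n) * f n ≤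
      sSup (f '' Set.Icc ⌊(1 - δ) * ((N : ℝ) * q)⌋₊ ⌈(1 + δ) * ((N : ℝ) * q)⌉₊) +
        2 * Real.exp (-(((N : ℝ) * q) * δ ^ 2) / 3) := by
  obtain ⟨hq0, hq1⟩ := hq
  obtain ⟨hδ0, hδ1⟩ := hδ
  set μ : ℝ := (N : ℝ) * q with hμ_def
  have hμ0 : 0 ≤ μ := mul_nonneg (Nat.cast_nonneg N) hq0
  set L : ℕ := ⌊(1 - δ) * μ⌋₊ with hL_def
  set U : ℕ := ⌈(1 + δ) * μ⌉₊ with hU_def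
  set E : ℝ := Real.exp (-(μ * δ ^ 2) / 3) with hE_def
  set p : ℕ → ℝ := fun n => (N.choose n : ℝ) * q ^ n * (1 - q) ^ (N - n) with hp_def
  set g : ℝ := sInf (f '' Set.Icc L U) with hg_def
  set h : ℝ := sSup (f '' Set.Icc L U) with hh_def
  have hgoalF : ∑ n ∈ Finset.range (N + 1),
      (N.choose n : ℝ) * q ^ n * (1 - q) ^ (N - n) * f n
      = ∑ n ∈ Finset.range (N + 1), p n * f n := rfl
  rw [hgoalF]
  have hBμ0 : 0 ≤ (1 - δ) * μ := mul_nonneg (by linarith) hμ0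
  have hUceil : (1 + δ) * μ ≤ (U : ℝ) := Nat.le_ceil _
  have hLfloor : (L : ℝ) ≤ (1 - δ) * μ := Nat.floor_le hBμ0
  have hLU : L ≤ U := by
    have h3 : (1 - δ) * μ ≤ (1 + δ) * μ := by nlinarith
    exact_mod_cast hLfloor.trans (h3.trans hUceil)
  clear_value μ L U E p g h
  have hp : ∀ n, 0 ≤ p n := fun n => by
    rw [hp_def]
    have : (0:ℝ) ≤ 1 - q := by linarith
    positivity
  have hSne : (f '' Set.Icc L U).Nonempty :=
    ⟨f L, L, Set.mem_Icc.2 ⟨le_refl L, hLU⟩, rfl⟩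
  have hbddB : BddBelow (f '' Set.Icc L U) :=
    ⟨0, fun x ⟨n, _, hn⟩ => hn ▸ (hf n).1⟩
  have hbddA : BddAbove (f '' Set.Icc L U) :=
    ⟨1, fun x ⟨n, _, hn⟩ => hn ▸ (hf n).2⟩
  have hg0 : 0 ≤ g := hg_def ▸ le_csInf hSne (fun b ⟨n, _, hn⟩ => hn ▸ (hf n).1)
  have hh0 : 0 ≤ h :=
    (hf L).1.trans (hh_def ▸ le_csSup hbddA ⟨L, Set.mem_Icc.2 ⟨le_refl L, hLU⟩, rfl⟩)
  have hg_le : ∀ n, L ≤ n → n ≤ U → g ≤ f n := fun n h1 h2 =>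
    hg_def ▸ csInf_le hbddB ⟨n, Set.mem_Icc.2 ⟨h1, h2⟩, rfl⟩
  have hle_h : ∀ n, L ≤ n → n ≤ U → f n ≤ h := fun n h1 h2 =>
    hh_def ▸ le_csSup hbddA ⟨n, Set.mem_Icc.2 ⟨h1, h2⟩, rfl⟩
  have hsum1 : ∑ n ∈ Finset.range (N + 1), p n = 1 := by
    have := mgf_sum N q 1
    simp only [hp_def]
    simpa using this
  -- high tail
  have hhi : ∑ n ∈ (Finset.range (N + 1)).filter (fun n => U < n), p n ≤ E := by
    set t : ℝ := Real.log (1 + δ) with ht_def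
    have h1δ : (0:ℝ) < 1 + δ := by linarith
    have hexp_t : Real.exp t = 1 + δ := Real.exp_log h1δ
    have ht0 : 0 ≤ t := Real.log_nonneg (by linarith)
    have key := tail_le N p (fun n => Real.exp (t * n) * Real.exp (-(t * ((1 + δ) * μ)))) hp
      (fun n => U < n)
      (fun n => by positivity)
      (fun n hn => by
        show 1 ≤ Real.exp (t * n) * Real.exp (-(t * ((1 + δ) * μ)))
        rw [← Real.exp_add, ← Real.exp_zero]
        apply Real.exp_le_exp.2
        rw [Real.exp_zero]
        have h3 : (U : ℝ) ≤ (n : ℝ) := Nat.cast_le.2 hn.le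
        nlinarith [mul_le_mul_of_nonneg_left (hUceil.trans h3) ht0])
    have key : ∑ n ∈ (Finset.range (N + 1)).filter (fun n => U < n), p n
        ≤ ∑ n ∈ Finset.range (N + 1),
            p n * (Real.exp (t * n) * Real.exp (-(t * ((1 + δ) * μ)))) := key
    have heq : ∑ n ∈ Finset.range (N + 1),
        p n * (Real.exp (t * n) * Real.exp (-(t * ((1 + δ) * μ))))
        = (q * (1 + δ) + (1 - q)) ^ N * Real.exp (-(t * ((1 + δ) * μ))) := by
      rw [← mgf_sum N q (1 + δ), Finset.sum_mul]
      apply Finset.sum_congr rfl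
      intro n _
      rw [mul_comm t (n:ℝ), Real.exp_nat_mul, hexp_t]
      simp only [hp_def]
      ring
    rw [heq] at key
    have hb := mgf_bound N q (1 + δ) hq0 hq1 (by linarith)
    have key2 : ∑ n ∈ (Finset.range (N + 1)).filter (fun n => U < n), p n
        ≤ Real.exp ((N:ℝ) * (q * ((1 + δ) - 1))) * Real.exp (-(t * ((1 + δ) * μ))) :=
      key.trans (mul_le_mul_of_nonneg_right hb (Real.exp_nonneg _))
    rw [← Real.exp_add] at key2
    refine key2.trans ?_
    rw [hE_def]
    apply Real.exp_le_exp.2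
    have hA := aux_A δ hδ0.le hδ1.le
    have hA' := mul_le_mul_of_nonneg_left hA hμ0
    rw [hμ_def] at hA'
    rw [ht_def, hμ_def]
    have hprod : 0 ≤ ((N:ℝ) * q) * δ ^ 2 :=
      mul_nonneg (mul_nonneg (Nat.cast_nonneg N) hq0) (sq_nonneg δ)
    linarith [hA']
  -- low tail
  have hlo : ∑ n ∈ (Finset.range (N + 1)).filter (fun n => n < L), p n ≤ E := by
    set t : ℝ := -Real.log (1 - δ) with ht_def
    have h1δ : (0:ℝ) < 1 - δ := by linarith
    have hexp_t : Real.exp (-t) = 1 - δ := by rw [ht_def, neg_neg]; exact Real.exp_log h1δ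
    have ht0 : 0 ≤ t := by
      rw [ht_def]
      simp only [Left.nonneg_neg_iff]
      exact Real.log_nonpos (by linarith) (by linarith)
    have key := tail_le N p (fun n => Real.exp (-(t * n)) * Real.exp (t * ((1 - δ) * μ))) hp
      (fun n => n < L)
      (fun n => by positivity)
      (fun n hn => by
        show 1 ≤ Real.exp (-(t * n)) * Real.exp (t * ((1 - δ) * μ))
        rw [← Real.exp_add, ← Real.exp_zero]
        apply Real.exp_le_exp.2
        rw [Real.exp_zero]
        have h3 : (n : ℝ) ≤ (L : ℝ) := Nat.cast_le.2 hn.le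
        nlinarith [mul_le_mul_of_nonneg_left (h3.trans hLfloor) ht0])
    have key : ∑ n ∈ (Finset.range (N + 1)).filter (fun n => n < L), p n
        ≤ ∑ n ∈ Finset.range (N + 1),
            p n * (Real.exp (-(t * n)) * Real.exp (t * ((1 - δ) * μ))) := key
    have heq : ∑ n ∈ Finset.range (N + 1),
        p n * (Real.exp (-(t * n)) * Real.exp (t * ((1 - δ) * μ)))
        = (q * (1 - δ) + (1 - q)) ^ N * Real.exp (t * ((1 - δ) * μ)) := by
      rw [← mgf_sum N q (1 - δ), Finset.sum_mul]
      apply Finset.sum_congr rfl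
      intro n _
      rw [show -(t * (n:ℝ)) = (n:ℝ) * (-t) by ring, Real.exp_nat_mul, hexp_t]
      simp only [hp_def]
      ring
    rw [heq] at key
    have hb := mgf_bound N q (1 - δ) hq0 hq1 (by linarith)
    have key2 : ∑ n ∈ (Finset.range (N + 1)).filter (fun n => n < L), p n
        ≤ Real.exp ((N:ℝ) * (q * ((1 - δ) - 1))) * Real.exp (t * ((1 - δ) * μ)) :=
      key.trans (mul_le_mul_of_nonneg_right hb (Real.exp_nonneg _))
    rw [← Real.exp_add] at key2
    refine key2.trans ?_
    rw [hE_def]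
    apply Real.exp_le_exp.2
    have hB := aux_B δ hδ0.le hδ1
    have hB' := mul_le_mul_of_nonneg_left hB hμ0
    rw [hμ_def] at hB'
    rw [ht_def, hμ_def]
    have hprod : 0 ≤ ((N:ℝ) * q) * δ ^ 2 :=
      mul_nonneg (mul_nonneg (Nat.cast_nonneg N) hq0) (sq_nonneg δ)
    linarith [hB']
  -- split the sum
  have hsplit : ∀ u : ℕ → ℝ, ∑ n ∈ Finset.range (N + 1), u n
      = ∑ n ∈ (Finset.range (N + 1)).filter (fun n => n < L), u n
        + ∑ n ∈ (Finset.range (N + 1)).filter (fun n => L ≤ n ∧ n ≤ U), u n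
        + ∑ n ∈ (Finset.range (N + 1)).filter (fun n => U < n), u n := by
    intro u
    have e1 := Finset.sum_filter_add_sum_filter_not (Finset.range (N + 1)) (fun n => n < L) u
    have e2 := Finset.sum_filter_add_sum_filter_not
      ((Finset.range (N + 1)).filter (fun n => ¬ n < L)) (fun n => n ≤ U) u
    rw [Finset.filter_filter] at e2
    have e3 : ∑ n ∈ (Finset.range (N + 1)).filter (fun n => ¬ n < L ∧ n ≤ U), u n
        = ∑ n ∈ (Finset.range (N + 1)).filter (fun n => L ≤ n ∧ n ≤ U), u n := by
      apply Finset.sum_congr _ (fun _ _ => rfl)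
      apply Finset.filter_congr
      intro n _
      simp [not_lt]
    have e4 : ∑ n ∈ ((Finset.range (N + 1)).filter (fun n => ¬ n < L)).filter
          (fun n => ¬ n ≤ U), u n
        = ∑ n ∈ (Finset.range (N + 1)).filter (fun n => U < n), u n := by
      rw [Finset.filter_filter]
      apply Finset.sum_congr _ (fun _ _ => rfl)
      apply Finset.filter_congr
      intro n _
      simp only [not_lt, not_le, eq_iff_iff]
      constructor
      · exact fun hx => hx.2
      · exact fun hx => ⟨hLU.trans hx.le, hx⟩
    linarith
  have hE0 : 0 ≤ E := hE_def ▸ Real.exp_nonneg _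
  have hmid_le_one : ∑ n ∈ (Finset.range (N + 1)).filter (fun n => L ≤ n ∧ n ≤ U), p n ≤ 1 := by
    rw [← hsum1]
    exact Finset.sum_le_sum_of_subset_of_nonneg (Finset.filter_subset _ _)
      (fun n _ _ => hp n)
  have hmid_ge : 1 - 2 * E
      ≤ ∑ n ∈ (Finset.range (N + 1)).filter (fun n => L ≤ n ∧ n ≤ U), p n := by
    have := hsplit p
    rw [hsum1] at this
    linarith
  constructor
  · -- lower bound
    have h1 : ∑ n ∈ (Finset.range (N + 1)).filter (fun n => L ≤ n ∧ n ≤ U), p n * f n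
        ≤ ∑ n ∈ Finset.range (N + 1), p n * f n :=
      Finset.sum_le_sum_of_subset_of_nonneg (Finset.filter_subset _ _)
        (fun n _ _ => mul_nonneg (hp n) (hf n).1)
    have h2 : g * ∑ n ∈ (Finset.range (N + 1)).filter (fun n => L ≤ n ∧ n ≤ U), p n
        ≤ ∑ n ∈ (Finset.range (N + 1)).filter (fun n => L ≤ n ∧ n ≤ U), p n * f n := by
      rw [Finset.mul_sum]
      apply Finset.sum_le_sum
      intro n hn
      obtain ⟨-, hL', hU'⟩ := Finset.mem_filter.1 hn
      rw [mul_comm]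
      exact mul_le_mul_of_nonneg_left (hg_le n hL' hU') (hp n)
    have h3 := mul_le_mul_of_nonneg_left hmid_ge hg0
    exact h3.trans (h2.trans h1)
  · -- upper bound
    have h1 : ∑ n ∈ (Finset.range (N + 1)).filter (fun n => n < L), p n * f n
        ≤ ∑ n ∈ (Finset.range (N + 1)).filter (fun n => n < L), p n :=
      Finset.sum_le_sum (fun n _ => mul_le_of_le_one_right (hp n) (hf n).2)
    have h2 : ∑ n ∈ (Finset.range (N + 1)).filter (fun n => U < n), p n * f n
        ≤ ∑ n ∈ (Finset.range (N + 1)).filter (fun n => U < n), p n :=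
      Finset.sum_le_sum (fun n _ => mul_le_of_le_one_right (hp n) (hf n).2)
    have h3 : ∑ n ∈ (Finset.range (N + 1)).filter (fun n => L ≤ n ∧ n ≤ U), p n * f n
        ≤ (∑ n ∈ (Finset.range (N + 1)).filter (fun n => L ≤ n ∧ n ≤ U), p n) * h := by
      rw [Finset.sum_mul]
      apply Finset.sum_le_sum
      intro n hn
      obtain ⟨-, hL', hU'⟩ := Finset.mem_filter.1 hn
      exact mul_le_mul_of_nonneg_left (hle_h n hL' hU') (hp n)
    have h4 : (∑ n ∈ (Finset.range (N + 1)).filter (fun n => L ≤ n ∧ n ≤ U), p n) * h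
        ≤ 1 * h := mul_le_mul_of_nonneg_right hmid_le_one hh0
    have h5 := hsplit (fun n => p n * f n)
    linarith
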